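/- Let 0 < μ ≤ L, let f ∈ S²_{μ,L}(ℝ^d) with unique minimizer x⋆, let 0 < s < 1/L, and let X : (0,∞) → ℝ^d be a twice differentiable solution of the gradient-correction high-resolution ODE. Set T = 4/(μ√s). Then for all t ≥ T, f(X(t)) − f(x⋆) ≤ ( E(T) / (2t(t+√s)) ) · exp( −(μ√s/4)(t − T) ), where E is the continuous Lyapunov function. -/

import Mathlib

open scoped RealInnerProductSpace

/-- The continuous Lyapunov function
`E(t) = 2t(t+√s)(F(X t) - F(x⋆)) + (t²/2)‖Ẋ(t)‖²
        + (1/2)‖tẊ(t) + 2(X(t) - x⋆) + t√s∇F(X t)‖²`. -/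
noncomputable def contLyap {d : ℕ} (s : ℝ) (F : EuclideanSpace ℝ (Fin d) → ℝ)
    (F' : EuclideanSpace ℝ (Fin d) → EuclideanSpace ℝ (Fin d))
    (X V : ℝ → EuclideanSpace ℝ (Fin d)) (xstar : EuclideanSpace ℝ (Fin d)) (t : ℝ) : ℝ :=
  2 * t * (t + Real.sqrt s) * (F (X t) - F xstar) + t ^ 2 / 2 * ‖V t‖ ^ 2
    + 1 / 2 * ‖t • V t + (2 : ℝ) • (X t - xstar) + (t * Real.sqrt s) • F' (X t)‖ ^ 2


lemma aux_sc {d : ℕ} {μ : ℝ} (f : EuclideanSpace ℝ (Fin d) → ℝ)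
    (f' : EuclideanSpace ℝ (Fin d) → EuclideanSpace ℝ (Fin d))
    (hdiff : ∀ z, HasGradientAt f (f' z) z)
    (hsc : ConvexOn ℝ Set.univ (fun z => f z - μ / 2 * ‖z‖ ^ 2))
    (x y : EuclideanSpace ℝ (Fin d)) :
    f x + ⟪f' x, y - x⟫ + μ / 2 * ‖y - x‖ ^ 2 ≤ f y := by
  set γ : ℝ → EuclideanSpace ℝ (Fin d) := fun τ => τ • (y - x) + x with hγdef
  have hγ : ∀ τ : ℝ, HasDerivAt γ (y - x) τ := by
    intro τ
    exact (((hasDerivAt_id τ).smul_const (y - x)).add_const x).congr_deriv (one_smul ℝ _)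
  have hγ0 : γ 0 = x := by simp [hγdef]
  have hγ1 : γ 1 = y := by simp [hγdef]
  set φ : ℝ → ℝ := fun τ => f (γ τ) - μ / 2 * ‖γ τ‖ ^ 2 with hφdef
  have hφconv : ConvexOn ℝ Set.univ φ := by
    have := hsc.comp_affineMap (AffineMap.lineMap x y : ℝ →ᵃ[ℝ] EuclideanSpace ℝ (Fin d))
    have heq : (fun z => f z - μ / 2 * ‖z‖ ^ 2) ∘ (AffineMap.lineMap x y) = φ := by
      funext τ
      simp [hφdef, hγdef, AffineMap.lineMap_apply, Function.comp]
    rw [heq] at this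
    simpa using this
  have h1 : HasDerivAt (fun τ => f (γ τ)) ⟪f' x, y - x⟫ 0 := by
    have := ((hdiff (γ 0)).hasFDerivAt).comp_hasDerivAt 0 (hγ 0)
    rw [hγ0] at this
    simp at this
    exact this
  have h2 : HasDerivAt (fun τ => ‖γ τ‖ ^ 2 : ℝ → ℝ) (⟪x, y - x⟫ + ⟪y - x, x⟫) 0 := by
    have := (hγ 0).inner ℝ (hγ 0)
    rw [hγ0] at this
    simpa only [real_inner_self_eq_norm_sq] using this
  have hφ0 : HasDerivAt φ (⟪f' x, y - x⟫ - μ / 2 * (⟪x, y - x⟫ + ⟪y - x, x⟫)) 0 :=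
    h1.sub (h2.const_mul (μ / 2))
  have key := hφconv.le_slope_of_hasDerivAt (Set.mem_univ 0) (Set.mem_univ 1) zero_lt_one hφ0
  rw [slope_def_field] at key
  simp only [hφdef, hγ0, hγ1] at key
  have e1 : ‖y - x‖ ^ 2 = ⟪y, y⟫ - ⟪x, y⟫ - ⟪y, x⟫ + ⟪x, x⟫ := by
    rw [← real_inner_self_eq_norm_sq]
    simp only [inner_sub_left, inner_sub_right]; ring
  have e2 : ⟪x, y - x⟫ = ⟪x, y⟫ - ⟪x, x⟫ := by rw [inner_sub_right]
  have e3 : ⟪y - x, x⟫ = ⟪y, x⟫ - ⟪x, x⟫ := by rw [inner_sub_left]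
  have e4 : ‖y‖ ^ 2 = ⟪y, y⟫ := (real_inner_self_eq_norm_sq y).symm
  have e5 : ‖x‖ ^ 2 = ⟪x, x⟫ := (real_inner_self_eq_norm_sq x).symm
  have hcomm : ⟪x, y⟫ = ⟪y, x⟫ := real_inner_comm y x
  rw [e2, e3, e4, e5] at key
  rw [e1]
  linarith

lemma aux_lim {d : ℕ} {μ : ℝ} {f' : EuclideanSpace ℝ (Fin d) → EuclideanSpace ℝ (Fin d)}
    {X : ℝ → EuclideanSpace ℝ (Fin d)} {v G : EuclideanSpace ℝ (Fin d)} {t : ℝ}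
    (hXd : HasDerivAt X v t) (hGd : HasDerivAt (fun τ => f' (X τ)) G t)
    (hmono : ∀ x y, μ * ‖y - x‖ ^ 2 ≤ ⟪f' y - f' x, y - x⟫) :
    μ * ‖v‖ ^ 2 ≤ ⟪G, v⟫ := by
  have hXs := hasDerivAt_iff_tendsto_slope.mp hXd
  have hGs := hasDerivAt_iff_tendsto_slope.mp hGd
  have h1 : Filter.Tendsto (fun τ => ⟪slope (fun τ => f' (X τ)) t τ, slope X t τ⟫)
      (nhdsWithin t {t}ᶜ) (nhds ⟪G, v⟫) := hGs.inner hXs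
  have h2 : Filter.Tendsto (fun τ => μ * ‖slope X t τ‖ ^ 2) (nhdsWithin t {t}ᶜ)
      (nhds (μ * ‖v‖ ^ 2)) := ((hXs.norm.pow 2).const_mul μ)
  refine le_of_tendsto_of_tendsto h2 h1 ?_
  filter_upwards [self_mem_nhdsWithin] with τ hτ
  have h3 := hmono (X t) (X τ)
  have h4 : (0:ℝ) ≤ ((τ - t)⁻¹) ^ 2 := sq_nonneg _
  simp only [slope_def_module, real_inner_smul_left, real_inner_smul_right, norm_smul,
    mul_pow, sq_abs, abs_inv, Real.norm_eq_abs]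
  calc μ * (|τ - t|⁻¹ ^ 2 * ‖X τ - X t‖ ^ 2)
      = ((τ - t)⁻¹)^2 * (μ * ‖X τ - X t‖ ^ 2) := by rw [← abs_inv, sq_abs]; ring
    _ ≤ ((τ - t)⁻¹)^2 * ⟪f' (X τ) - f' (X t), X τ - X t⟫ := by
        exact mul_le_mul_of_nonneg_left h3 h4
    _ = (τ - t)⁻¹ * ((τ - t)⁻¹ * ⟪f' (X τ) - f' (X t), X τ - X t⟫) := by ring

lemma aux_gronwall {E D : ℝ → ℝ} {k T : ℝ} (hk : 0 < k) (hT : 0 < T)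
    (hE : ∀ t, 0 < t → HasDerivAt E (D t) t) (hD : ∀ t, T ≤ t → D t + k * E t ≤ 0) :
    ∀ t, T ≤ t → E t ≤ E T * Real.exp (-(k * (t - T))) := by
  set g : ℝ → ℝ := fun t => E t * Real.exp (k * (t - T)) with hg
  have hg' : ∀ t, 0 < t → HasDerivAt g
      ((D t + k * E t) * Real.exp (k * (t - T))) t := by
    intro t ht
    have he : HasDerivAt (fun t => Real.exp (k * (t - T)))
        (Real.exp (k * (t - T)) * (k * 1)) t :=
      (((hasDerivAt_id t).sub_const T).const_mul k).exp
    have := (hE t ht).mul he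
    refine this.congr_deriv ?_
    ring
  have hanti : AntitoneOn g (Set.Ici T) := by
    apply antitoneOn_of_deriv_nonpos (convex_Ici T)
    · intro x hx
      exact ((hg' x (lt_of_lt_of_le hT hx)).continuousAt).continuousWithinAt
    · intro x hx
      rw [interior_Ici] at hx
      exact (hg' x (hT.trans hx)).differentiableAt.differentiableWithinAt
    · intro x hx
      rw [interior_Ici] at hx
      rw [(hg' x (hT.trans hx)).deriv]
      have := hD x hx.le
      have hep : (0:ℝ) < Real.exp (k * (x - T)) := Real.exp_pos _
      nlinarith
  intro t ht
  have h1 : g t ≤ g T := hanti Set.self_mem_Ici ht ht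
  have h2 : g T = E T := by simp [hg]
  have h3 : E t = g t * Real.exp (-(k * (t - T))) := by
    simp only [hg]
    rw [mul_assoc, ← Real.exp_add]
    simp
  rw [h3]
  rw [h2] at h1
  exact mul_le_mul_of_nonneg_right h1 (Real.exp_nonneg _)

set_option maxHeartbeats 1000000 in
lemma aux_scalar (μ c u δ P Q R Ag vG Wq : ℝ)
    (hμ : 0 < μ) (hc : 0 < c) (hu0 : 0 < u) (hu4 : 4 ≤ μ * c * u) (huc : c ≤ u)
    (hμc2 : μ * c ^ 2 < 1)
    (hδ0 : 0 ≤ δ) (hP : 0 ≤ P) (hQ : 0 ≤ Q) (hR : 0 ≤ R)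
    (hvG : μ * P ≤ vG) (hAg : δ + μ / 2 * R ≤ Ag) (hPL : 2 * μ * δ ≤ Q)
    (hWbound : Wq ≤ 3 * u ^ 2 * P + 12 * R + 3 * u ^ 2 * c ^ 2 * Q) :
    ((4 * u + 2 * c) * δ - 2 * u * P - u ^ 2 * c * vG - (2 * u + c) * Ag
        - u * c * (u + c / 2) * Q)
      + μ * c / 4 * (2 * u * (u + c) * δ + u ^ 2 / 2 * P + 1 / 2 * Wq) ≤ 0 := by
  have hQcoef : 0 ≤ 6 * μ * c * u ^ 2 + 2 * μ * c ^ 2 * u - 3 * μ ^ 2 * c ^ 3 * u ^ 2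
      - 8 * u - 4 * c := by
    have ha : 0 ≤ 3 * μ * c * u ^ 2 * (1 - μ * c ^ 2) := by
      apply mul_nonneg (by positivity); linarith
    have hb : 12 * u ≤ 3 * μ * c * u ^ 2 := by nlinarith
    have hcc : 0 ≤ 2 * μ * c ^ 2 * u := by positivity
    nlinarith
  have M1 : 0 ≤ 8 * μ * u ^ 2 * c * (vG - μ * P) := by
    apply mul_nonneg (by positivity); linarith
  have M2 : 0 ≤ 8 * μ * (2 * u + c) * (Ag - (δ + μ / 2 * R)) := by
    apply mul_nonneg (by positivity); linarith
  have M3 : 0 ≤ μ ^ 2 * c * (3 * u ^ 2 * P + 12 * R + 3 * u ^ 2 * c ^ 2 * Q - Wq) := by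
    apply mul_nonneg (by positivity); linarith
  have M4 : 0 ≤ (4 * (2 * u + c) + 2 * μ * c * u * (u + c)) * (Q - 2 * μ * δ) := by
    apply mul_nonneg (by positivity); linarith
  have M5 : 0 ≤ (16 * μ * u + 4 * μ ^ 2 * c * u ^ 2) * P := by positivity
  have M6 : 0 ≤ μ ^ 2 * (8 * u - 8 * c) * R := by
    apply mul_nonneg (by nlinarith); exact hR
  have M7 : 0 ≤ (6 * μ * c * u ^ 2 + 2 * μ * c ^ 2 * u - 3 * μ ^ 2 * c ^ 3 * u ^ 2
      - 8 * u - 4 * c) * Q := mul_nonneg hQcoef hQ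
  have H : 8 * μ * (((4 * u + 2 * c) * δ - 2 * u * P - u ^ 2 * c * vG - (2 * u + c) * Ag
        - u * c * (u + c / 2) * Q)
      + μ * c / 4 * (2 * u * (u + c) * δ + u ^ 2 / 2 * P + 1 / 2 * Wq)) ≤ 0 := by
    linarith [M1, M2, M3, M4, M5, M6, M7]
  by_contra hcon
  push_neg at hcon
  have h8 : (0:ℝ) < 8 * μ := by positivity
  nlinarith [mul_pos h8 hcon, H]

set_option maxHeartbeats 2000000 in
theorem gradient_correction_ode_linear_convergence {d : ℕ} (μ L s : ℝ)
    (hμ : 0 < μ) (hμL : μ ≤ L) (hs : 0 < s) (hsL : s < 1 / L)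
    (f : EuclideanSpace ℝ (Fin d) → ℝ)
    (f' : EuclideanSpace ℝ (Fin d) → EuclideanSpace ℝ (Fin d))
    (hf2 : ContDiff ℝ 2 f)
    (hdiff : ∀ z, HasGradientAt f (f' z) z)
    (hlip : ∀ z w, ‖f' z - f' w‖ ≤ L * ‖z - w‖)
    (hsc : ConvexOn ℝ Set.univ (fun z => f z - μ / 2 * ‖z‖ ^ 2))
    (xstar : EuclideanSpace ℝ (Fin d)) (hmin : ∀ z, f xstar ≤ f z)
    (huniq : ∀ z, (∀ w, f z ≤ f w) → z = xstar)
    (X X' X'' G' : ℝ → EuclideanSpace ℝ (Fin d))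
    (hX : ∀ t : ℝ, 0 < t → HasDerivAt X (X' t) t)
    (hX' : ∀ t : ℝ, 0 < t → HasDerivAt X' (X'' t) t)
    (hG' : ∀ t : ℝ, 0 < t → HasDerivAt (fun τ => f' (X τ)) (G' t) t)
    (hode : ∀ t : ℝ, 0 < t →
      X'' t + (3 / t) • X' t + Real.sqrt s • G' t
        + (1 + 3 * Real.sqrt s / (2 * t)) • f' (X t) = 0)
    :
    ∀ t : ℝ, 4 / (μ * Real.sqrt s) ≤ t →
      f (X t) - f xstar ≤
        contLyap s f f' X X' xstar (4 / (μ * Real.sqrt s)) / (2 * t * (t + Real.sqrt s)) *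
          Real.exp (-(μ * Real.sqrt s / 4) * (t - 4 / (μ * Real.sqrt s))) := by
  have hL : 0 < L := lt_of_lt_of_le hμ hμL
  have hc : 0 < Real.sqrt s := Real.sqrt_pos.mpr hs
  set c : ℝ := Real.sqrt s with hcdef
  have hc2 : c ^ 2 = s := Real.sq_sqrt hs.le
  have hsL' : s * L < 1 := (lt_div_iff₀ hL).mp hsL
  have hμc2 : μ * c ^ 2 < 1 := by
    rw [hc2]
    nlinarith [mul_le_mul_of_nonneg_right hμL hs.le]
  set T : ℝ := 4 / (μ * c) with hTdef
  have hT0 : 0 < T := by positivity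
  set k : ℝ := μ * c / 4 with hkdef
  have hk0 : 0 < k := by positivity
  -- strong convexity consequences
  have hsc' : ∀ x y, f x + ⟪f' x, y - x⟫ + μ / 2 * ‖y - x‖ ^ 2 ≤ f y :=
    aux_sc f f' hdiff hsc
  have hmono : ∀ x y, μ * ‖y - x‖ ^ 2 ≤ ⟪f' y - f' x, y - x⟫ := by
    intro x y
    have h1 := hsc' x y
    have h2 := hsc' y x
    have e1 : ⟪f' y, x - y⟫ = -⟪f' y, y - x⟫ := by
      rw [← neg_sub y x, inner_neg_right]
    have e2 : ⟪f' y - f' x, y - x⟫ = ⟪f' y, y - x⟫ - ⟪f' x, y - x⟫ := inner_sub_left _ _ _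
    have e3 : ‖x - y‖ = ‖y - x‖ := norm_sub_rev x y
    rw [e3] at h2
    rw [e1] at h2
    rw [e2]
    linarith
  have hGle : ∀ u, 0 < u → μ * ‖X' u‖ ^ 2 ≤ ⟪G' u, X' u⟫ := fun u hu =>
    aux_lim (hX u hu) (hG' u hu) hmono
  -- functions
  set w : ℝ → EuclideanSpace ℝ (Fin d) :=
    fun u => u • X' u + (2 : ℝ) • (X u - xstar) + (u * c) • f' (X u) with hwdef
  set W' : ℝ → EuclideanSpace ℝ (Fin d) :=
    fun u => u • X'' u + (1 : ℝ) • X' u + (2 : ℝ) • X' u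
      + ((u * c) • G' u + (1 * c) • f' (X u)) with hWdef
  set EI : ℝ → ℝ := fun u => 2 * u * (u + c) * (f (X u) - f xstar)
    + u ^ 2 / 2 * ⟪X' u, X' u⟫ + 1 / 2 * ⟪w u, w u⟫ with hEIdef
  set D : ℝ → ℝ := fun u => (2 * (u + c) + 2 * u) * (f (X u) - f xstar)
    + 2 * u * (u + c) * ⟪f' (X u), X' u⟫
    + (u * ⟪X' u, X' u⟫ + u ^ 2 / 2 * (⟪X' u, X'' u⟫ + ⟪X'' u, X' u⟫))
    + 1 / 2 * (⟪w u, W' u⟫ + ⟪W' u, w u⟫) with hDdef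
  have hEq : ∀ u, contLyap s f f' X X' xstar u = EI u := by
    intro u
    simp only [contLyap, hEIdef, hwdef, real_inner_self_eq_norm_sq, ← hcdef]
  have hEIderiv : ∀ u, 0 < u → HasDerivAt EI (D u) u := by
    intro u hu
    have hfX : HasDerivAt (fun τ => f (X τ)) ⟪f' (X u), X' u⟫ u := by
      have h := (hdiff (X u)).hasFDerivAt.comp_hasDerivAt u (hX u hu)
      simp at h
      exact h
    have h1 : HasDerivAt (fun τ : ℝ => 2 * τ * (τ + c)) (2 * (u + c) + 2 * u) u := by
      have := ((hasDerivAt_id u).const_mul (2 : ℝ)).mul ((hasDerivAt_id u).add_const c)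
      exact this.congr_deriv (by simp only [id_eq]; ring)
    have hterm1 := h1.mul (hfX.sub_const (f xstar))
    have h2 : HasDerivAt (fun τ : ℝ => τ ^ 2 / 2) u u := by
      have := (hasDerivAt_pow 2 u).div_const 2
      refine this.congr_deriv ?_
      norm_num
    have hterm2 := h2.mul ((hX' u hu).inner ℝ (hX' u hu))
    have hw1 : HasDerivAt (fun τ => τ • X' τ) (u • X'' u + (1 : ℝ) • X' u) u :=
      (hasDerivAt_id u).smul (hX' u hu)
    have hw2 : HasDerivAt (fun τ => (2 : ℝ) • (X τ - xstar)) ((2 : ℝ) • X' u) u :=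
      ((hX u hu).sub_const xstar).const_smul (2 : ℝ)
    have hw3 : HasDerivAt (fun τ => (τ * c) • f' (X τ))
        ((u * c) • G' u + (1 * c) • f' (X u)) u :=
      ((hasDerivAt_id u).mul_const c).smul (hG' u hu)
    have hwD : HasDerivAt w (W' u) u := (hw1.add hw2).add hw3
    have hterm3 := (hwD.inner ℝ hwD).const_mul (1 / 2 : ℝ)
    have hall := (hterm1.add hterm2).add hterm3
    exact hall
  have hkey : ∀ u, T ≤ u → D u + k * EI u ≤ 0 := by
    intro u hu
    have hu0 : 0 < u := lt_of_lt_of_le hT0 hu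
    have hune : u ≠ 0 := ne_of_gt hu0
    have hμc0 : (0:ℝ) < μ * c := by positivity
    have hu4 : 4 ≤ μ * c * u := by
      rw [hTdef, div_le_iff₀ hμc0] at hu
      linarith
    have huc : c ≤ u := by
      by_contra h
      push_neg at h
      nlinarith [mul_lt_mul_of_pos_left h hμc0]
    set A : EuclideanSpace ℝ (Fin d) := X u - xstar with hAdef
    have hodeu : u • X'' u + (3:ℝ) • X' u + (u * c) • G' u
        + (u + 3 * c / 2) • f' (X u) = 0 := by
      have h := hode u hu0
      have e3 : u * (3 / u) = 3 := by field_simp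
      have e4 : u * (1 + 3 * c / (2 * u)) = u + 3 * c / 2 := by field_simp
      calc u • X'' u + (3:ℝ) • X' u + (u * c) • G' u + (u + 3 * c / 2) • f' (X u)
          = u • (X'' u + (3 / u) • X' u + c • G' u + (1 + 3 * c / (2 * u)) • f' (X u)) := by
            rw [smul_add, smul_add, smul_add, smul_smul, smul_smul, smul_smul, e3, e4]
        _ = u • (0 : EuclideanSpace ℝ (Fin d)) := by rw [h]
        _ = 0 := smul_zero u
    have hscal : ∀ z : EuclideanSpace ℝ (Fin d),
        u * ⟪z, X'' u⟫ = -3 * ⟪z, X' u⟫ - u * c * ⟪z, G' u⟫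
          - (u + 3 * c / 2) * ⟪z, f' (X u)⟫ := by
      intro z
      have h0 := congrArg (fun y => (⟪z, y⟫ : ℝ)) hodeu
      simp only [inner_add_right, real_inner_smul_right, inner_zero_right] at h0
      linarith [h0]
    have hsc1 := hsc' (X u) xstar
    have hAg : (f (X u) - f xstar) + μ / 2 * ⟪A, A⟫ ≤ ⟪A, f' (X u)⟫ := by
      have e1 : ⟪f' (X u), xstar - X u⟫ = -⟪A, f' (X u)⟫ := by
        rw [hAdef, ← neg_sub (X u) xstar, inner_neg_right, real_inner_comm]
      have e2 : ‖xstar - X u‖ ^ 2 = ⟪A, A⟫ := by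
        rw [hAdef, norm_sub_rev]
        exact (real_inner_self_eq_norm_sq _).symm
      rw [e1, e2] at hsc1
      linarith
    have hPL : 2 * μ * (f (X u) - f xstar) ≤ ⟪f' (X u), f' (X u)⟫ := by
      have n3 : (0:ℝ) ≤ ⟪f' (X u) - μ • A, f' (X u) - μ • A⟫ := real_inner_self_nonneg
      simp only [inner_sub_left, inner_sub_right, real_inner_smul_left,
        real_inner_smul_right] at n3
      have hcm : ⟪f' (X u), A⟫ = ⟪A, f' (X u)⟫ := real_inner_comm _ _
      rw [hcm] at n3
      nlinarith [n3, mul_le_mul_of_nonneg_left hAg (by positivity : (0:ℝ) ≤ 2 * μ),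
        (real_inner_self_nonneg : (0:ℝ) ≤ ⟪A, A⟫)]
    have hvG : μ * ⟪X' u, X' u⟫ ≤ ⟪X' u, G' u⟫ := by
      calc μ * ⟪X' u, X' u⟫ = μ * ‖X' u‖ ^ 2 := by rw [real_inner_self_eq_norm_sq]
        _ ≤ ⟪G' u, X' u⟫ := hGle u hu0
        _ = ⟪X' u, G' u⟫ := real_inner_comm _ _
    have hwu : w u = u • X' u + (2:ℝ) • A + (u * c) • f' (X u) := by
      simp only [hwdef, hAdef]
    have hwg : ⟪w u, f' (X u)⟫ = u * ⟪X' u, f' (X u)⟫ + 2 * ⟪A, f' (X u)⟫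
        + u * c * ⟪f' (X u), f' (X u)⟫ := by
      rw [hwu]
      simp only [inner_add_left, real_inner_smul_left]
    have hWexp : ⟪w u, W' u⟫ = u * ⟪w u, X'' u⟫ + 3 * ⟪w u, X' u⟫
        + (u * c * ⟪w u, G' u⟫ + c * ⟪w u, f' (X u)⟫) := by
      simp only [hWdef, inner_add_right, real_inner_smul_right]
      ring
    have hwW : ⟪w u, W' u⟫ = -(u + c / 2) * ⟪w u, f' (X u)⟫ := by
      rw [hWexp, hscal (w u)]
      ring
    have hWq : ⟪w u, w u⟫ ≤ 3 * u ^ 2 * ⟪X' u, X' u⟫ + 12 * ⟪A, A⟫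
        + 3 * u ^ 2 * c ^ 2 * ⟪f' (X u), f' (X u)⟫ := by
      have m1 : (0:ℝ) ≤ ⟪u • X' u - (2:ℝ) • A, u • X' u - (2:ℝ) • A⟫ :=
        real_inner_self_nonneg
      have m2 : (0:ℝ) ≤ ⟪u • X' u - (u * c) • f' (X u), u • X' u - (u * c) • f' (X u)⟫ :=
        real_inner_self_nonneg
      have m3 : (0:ℝ) ≤ ⟪(2:ℝ) • A - (u * c) • f' (X u), (2:ℝ) • A - (u * c) • f' (X u)⟫ :=
        real_inner_self_nonneg
      rw [hwu]
      simp only [inner_add_left, inner_add_right, inner_sub_left, inner_sub_right,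
        real_inner_smul_left, real_inner_smul_right,
        real_inner_comm (X' u) A, real_inner_comm (X' u) (f' (X u)),
        real_inner_comm A (f' (X u))] at m1 m2 m3 ⊢
      linarith [m1, m2, m3]
    have hDval : D u = (4 * u + 2 * c) * (f (X u) - f xstar) - 2 * u * ⟪X' u, X' u⟫
        - u ^ 2 * c * ⟪X' u, G' u⟫ - (2 * u + c) * ⟪A, f' (X u)⟫
        - u * c * (u + c / 2) * ⟪f' (X u), f' (X u)⟫ := by
      have hva := hscal (X' u)
      have c1 : ⟪X'' u, X' u⟫ = ⟪X' u, X'' u⟫ := real_inner_comm _ _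
      have c2 : ⟪f' (X u), X' u⟫ = ⟪X' u, f' (X u)⟫ := real_inner_comm _ _
      have c3 : ⟪W' u, w u⟫ = ⟪w u, W' u⟫ := real_inner_comm _ _
      simp only [hDdef]
      rw [c1, c2, c3, hwW, hwg]
      linear_combination u * hva
    have hδ0 : 0 ≤ f (X u) - f xstar := sub_nonneg.mpr (hmin (X u))
    have hEIu : EI u = 2 * u * (u + c) * (f (X u) - f xstar)
        + u ^ 2 / 2 * ⟪X' u, X' u⟫ + 1 / 2 * ⟪w u, w u⟫ := by simp only [hEIdef]
    rw [hDval, hkdef, hEIu]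
    exact aux_scalar μ c u (f (X u) - f xstar) ⟪X' u, X' u⟫ ⟪f' (X u), f' (X u)⟫
      ⟪A, A⟫ ⟪A, f' (X u)⟫ ⟪X' u, G' u⟫ ⟪w u, w u⟫
      hμ hc hu0 hu4 huc hμc2 hδ0 real_inner_self_nonneg real_inner_self_nonneg
      real_inner_self_nonneg hvG hAg hPL hWq
  have hdecay := aux_gronwall hk0 hT0 hEIderiv hkey
  intro t ht
  have ht0 : 0 < t := lt_of_lt_of_le hT0 ht
  have hz : (0:ℝ) < 2 * t * (t + c) := by positivity
  have hδ : 0 ≤ f (X t) - f xstar := sub_nonneg.mpr (hmin (X t))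
  have hlow : 2 * t * (t + c) * (f (X t) - f xstar) ≤ EI t := by
    simp only [hEIdef]
    have n1 : (0:ℝ) ≤ ⟪X' t, X' t⟫ := real_inner_self_nonneg
    have n2 : (0:ℝ) ≤ ⟪w t, w t⟫ := real_inner_self_nonneg
    linarith [mul_nonneg (sq_nonneg t) n1, n2]
  have hup := hdecay t ht
  rw [hEq, div_mul_eq_mul_div, le_div_iff₀ hz]
  have hTgoal : -(μ * c / 4) * (t - T) = -(k * (t - T)) := by rw [hkdef]; ring
  rw [hTgoal]
  calc (f (X t) - f xstar) * (2 * t * (t + c)) = 2 * t * (t + c) * (f (X t) - f xstar) := by ring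
    _ ≤ EI t := hlow
    _ ≤ EI T * Real.exp (-(k * (t - T))) := hup
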